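/- Let G be a finite abelian group with exponent n coprime to 2, and let * be the classical involution on F₂G given by (Σ a_g g)* = Σ a_g g^{-1}. Then F₂G is *-clean if and only if there exists a positive integer t with 2^t ≡ −1 (mod n). -/

import Mathlib

open Finsupp

namespace F2GAux

variable {G : Type*} [CommGroup G]

lemma add_self' (x : MonoidAlgebra (ZMod 2) G) : x + x = 0 := by
  have hz : ∀ a : ZMod 2, a + a = 0 := by decide
  exact MonoidAlgebra.ext <| Finsupp.ext fun g => by
    rw [MonoidAlgebra.coeff_add, MonoidAlgebra.coeff_zero, Finsupp.add_apply, Finsupp.zero_apply]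
    exact hz _

lemma two_eq_zero' : (2 : MonoidAlgebra (ZMod 2) G) = 0 := by
  have h : (1 : MonoidAlgebra (ZMod 2) G) + 1 = 2 := one_add_one_eq_two
  rw [← h]; exact add_self' 1

private lemma sq_add (x y : MonoidAlgebra (ZMod 2) G)
    (hx : x * x = MonoidAlgebra.mapDomain (fun g : G => g * g) x)
    (hy : y * y = MonoidAlgebra.mapDomain (fun g : G => g * g) y) :
    (x + y) * (x + y) = MonoidAlgebra.mapDomain (fun g : G => g * g) (x + y) := by
  have hxy : x * y + y * x = 0 := by rw [mul_comm y x]; exact add_self' _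
  have hexp : (x + y) * (x + y) = x * x + y * y + (x * y + y * x) := by ring
  rw [hexp, hxy, add_zero, hx, hy, MonoidAlgebra.mapDomain_add]

private lemma sq_single (a : G) (b : ZMod 2) :
    (MonoidAlgebra.single a b : MonoidAlgebra (ZMod 2) G) * MonoidAlgebra.single a b
      = MonoidAlgebra.mapDomain (fun g : G => g * g) (MonoidAlgebra.single a b) := by
  have h2 : ∀ c : ZMod 2, c * c = c := by decide
  have h1 : (MonoidAlgebra.single a b : MonoidAlgebra (ZMod 2) G) * MonoidAlgebra.single a b
      = MonoidAlgebra.single (a * a) (b * b) := MonoidAlgebra.single_mul_single ..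
  rw [h1, h2 b]
  exact (MonoidAlgebra.mapDomain_single (f := fun g : G => g * g) (a := a) (r := b)).symm

lemma mul_self_eq' (x : MonoidAlgebra (ZMod 2) G) :
    x * x = MonoidAlgebra.mapDomain (fun g : G => g * g) x := by
  induction x using MonoidAlgebra.induction_linear with
  | zero => simp
  | add f g hf hg => exact sq_add f g hf hg
  | single a b => exact sq_single a b

lemma pow_two_pow' (t : ℕ) (x : MonoidAlgebra (ZMod 2) G) :
    x ^ (2 ^ t) = MonoidAlgebra.mapDomain (fun g : G => g ^ (2 ^ t)) x := by
  induction t with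
  | zero =>
    simp only [pow_zero, pow_one]
    exact MonoidAlgebra.ext (Finsupp.mapDomain_id).symm
  | succ t ih =>
    have h2 : 2 ^ (t + 1) = 2 ^ t + 2 ^ t := Nat.two_pow_succ t
    rw [h2, pow_add, ih, mul_self_eq']
    apply MonoidAlgebra.ext
    show Finsupp.mapDomain _ (Finsupp.mapDomain _ x.coeff) = Finsupp.mapDomain _ x.coeff
    rw [← Finsupp.mapDomain_comp]
    congr 1
    funext g
    simp only [Function.comp_apply]
    rw [← pow_add]

lemma exists_idem_pow [Fintype G] (a : MonoidAlgebra (ZMod 2) G) :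
    ∃ N, 0 < N ∧ a ^ N * a ^ N = a ^ N := by
  classical
  haveI : Finite (MonoidAlgebra (ZMod 2) G) :=
    Finite.of_injective (fun x : MonoidAlgebra (ZMod 2) G => ((x.coeff : G →₀ ZMod 2) : G → ZMod 2))
      (fun x y hxy => MonoidAlgebra.coeff_injective (DFunLike.coe_injective (F := G →₀ ZMod 2) hxy))
  obtain ⟨i0, j0, hij, hija⟩ := Finite.exists_ne_map_eq_of_infinite (fun k : ℕ => a ^ k)
  have key : ∃ i j, i < j ∧ a ^ i = a ^ j := by
    rcases lt_or_gt_of_ne hij with h | h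
    · exact ⟨i0, j0, h, hija⟩
    · exact ⟨j0, i0, h, hija.symm⟩
  obtain ⟨i, j, hlt, heq⟩ := key
  set p := j - i with hp
  have hp1 : 1 ≤ p := by omega
  have step : ∀ m, i ≤ m → a ^ (m + p) = a ^ m := by
    intro m hm
    have h1 : a ^ (m + p) = a ^ (i + p) * a ^ (m - i) := by
      rw [← pow_add]; congr 1; omega
    have h2 : a ^ m = a ^ i * a ^ (m - i) := by
      rw [← pow_add]; congr 1; omega
    rw [h1, show i + p = j by omega, ← heq, ← h2]
  have iter : ∀ k m, i ≤ m → a ^ (m + k * p) = a ^ m := by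
    intro k
    induction k with
    | zero => simp
    | succ k ih =>
      intro m hm
      have h1 : m + (k + 1) * p = (m + p) + k * p := by ring
      rw [h1, ih _ (by omega), step m hm]
  refine ⟨p * (i + 1), by positivity, ?_⟩
  have hNi : i ≤ p * (i + 1) := by nlinarith
  rw [← pow_add, show p * (i + 1) + p * (i + 1) = p * (i + 1) + (i + 1) * p by ring]
  exact iter (i + 1) _ hNi

lemma clean' [Fintype G] (a : MonoidAlgebra (ZMod 2) G) :
    ∃ u e : MonoidAlgebra (ZMod 2) G, IsUnit u ∧ IsIdempotentElem e ∧ a = u + e := by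
  obtain ⟨N, hN, hidem⟩ := exists_idem_pow a
  set f := a ^ N with hfdef
  set S := ∑ k ∈ Finset.range N, a ^ k with hSdef
  have h0 : (2 : MonoidAlgebra (ZMod 2) G) = 0 := two_eq_zero'
  have h1 : f * f = f := hidem
  have h4 : a * a ^ (N - 1) = f := by
    rw [hfdef, ← pow_succ']
    congr 1
    omega
  have hneg : (-1 : MonoidAlgebra (ZMod 2) G) = 1 := by linear_combination -h0
  have h3 : (a + 1) * S = f + 1 := by
    calc (a + 1) * S = S * (a - 1) := by rw [sub_eq_add_neg, hneg]; ring
      _ = a ^ N - 1 := geom_sum_mul a N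
      _ = f + 1 := by rw [sub_eq_add_neg, hneg, hfdef]
  refine ⟨a + 1 + f, 1 + f, ?_, ?_, ?_⟩
  · exact IsUnit.of_mul_eq_one (a ^ (N - 1) * f + S + S * f)
      (by linear_combination f * h4 + (1 + f) * h3 + (a ^ (N - 1) + S) * h1
            + (a ^ (N - 1) * f + S * f + f ^ 2 + f) * h0)
  · show (1 + f) * (1 + f) = 1 + f
    linear_combination h1 + f * h0
  · linear_combination (-1 - f) * h0

lemma star_of_idem (t : ℕ) (hinv : ∀ h : G, h⁻¹ = h ^ (2 ^ t))
    {e : MonoidAlgebra (ZMod 2) G} (he : IsIdempotentElem e) :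
    Finsupp.mapDomain (fun g : G => g⁻¹) e.coeff = e.coeff := by
  have h1 : (fun g : G => g⁻¹) = fun g : G => g ^ (2 ^ t) := funext hinv
  show (MonoidAlgebra.mapDomain (fun g : G => g⁻¹) e).coeff = e.coeff
  rw [h1, ← pow_two_pow']
  obtain ⟨m, hm⟩ : ∃ m, 2 ^ t = m + 1 :=
    ⟨2 ^ t - 1, by have := Nat.one_le_two_pow (n := t); omega⟩
  rw [hm]
  rw [he.pow_succ_eq m]

end F2GAux

open F2GAux in
/-- Let `G` be a finite abelian group with exponent `n` coprime to `2`, and `*` the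
classical involution on `F₂G` (sending `Σ a_g g` to `Σ a_g g⁻¹`). Then `F₂G` is
`*`-clean iff `2^t ≡ −1 (mod n)` for some positive integer `t`. -/
theorem F2G_star_clean_iff
    (G : Type*) [CommGroup G] [Fintype G] (n : ℕ)
    (hn : Monoid.exponent G = n) (hcop : Nat.Coprime 2 n) :
    (∀ a : MonoidAlgebra (ZMod 2) G, ∃ u e : MonoidAlgebra (ZMod 2) G,
        IsUnit u ∧ IsIdempotentElem e ∧
        Finsupp.mapDomain (fun g : G => g⁻¹) e.coeff = e.coeff ∧ a = u + e) ↔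
      ∃ t : ℕ, 0 < t ∧ (2 : ZMod n) ^ t = -1 := by
  classical
  have hn0 : n ≠ 0 := by
    rintro rfl
    simpa [Nat.coprime_zero_right] using hcop
  haveI : NeZero n := ⟨hn0⟩
  constructor
  · intro H
    by_contra hno
    push_neg at hno
    have hn1 : n ≠ 1 := by
      rintro rfl
      exact hno 1 one_pos (Subsingleton.elim _ _)
    have hn2 : n ≠ 2 := by
      rintro rfl
      exact absurd hcop (by decide)
    obtain ⟨g, hg⟩ := Monoid.exists_orderOf_eq_exponent (G := G) Monoid.ExponentExists.of_finite
    rw [hn] at hg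
    have hcard : ¬ (2 ∣ Fintype.card G) := by
      intro h2
      haveI : Fact (Nat.Prime 2) := ⟨Nat.prime_two⟩
      obtain ⟨x, hx⟩ := exists_prime_orderOf_dvd_card 2 h2
      have hdn : (2 : ℕ) ∣ n := by
        rw [← hn, ← hx]
        exact Monoid.order_dvd_exponent x
      have : (2 : ℕ) ∣ 1 := hcop ▸ Nat.dvd_gcd dvd_rfl hdn
      omega
    have hinj : Function.Injective (fun x : G => x * x) := by
      have hc : (Nat.card G).Coprime 2 := by
        rw [Nat.card_eq_fintype_card]
        exact ((Nat.prime_two.coprime_iff_not_dvd).mpr hcard).symm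
      intro x y hxy
      apply (powCoprime hc).injective
      simpa [powCoprime, sq] using hxy
    set T : Finset G := Finset.univ.filter (fun h => ∃ k : ℕ, g ^ (2 ^ k) = h) with hT
    have hmemT : ∀ h : G, h ∈ T ↔ ∃ k : ℕ, g ^ (2 ^ k) = h := by
      intro h; simp [hT]
    set e : MonoidAlgebra (ZMod 2) G := ∑ h ∈ T, MonoidAlgebra.single h (1 : ZMod 2) with he_def
    have hcoef : ∀ h : G, e.coeff h = if h ∈ T then 1 else 0 := by
      intro h
      rw [he_def, MonoidAlgebra.coeff_sum, Finset.sum_apply']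
      simp [Finsupp.single_apply]
    have hgT : g ∈ T := (hmemT g).mpr ⟨0, by rw [pow_zero, pow_one]⟩
    have hginvT : g⁻¹ ∉ T := by
      rw [hmemT]
      rintro ⟨k, hk⟩
      have hpow : g ^ (2 ^ k + 1) = 1 := by
        rw [pow_add, pow_one, hk, inv_mul_cancel]
      have hdvd : n ∣ 2 ^ k + 1 := by
        rw [← hg]; exact orderOf_dvd_of_pow_eq_one hpow
      rcases Nat.eq_zero_or_pos k with rfl | hkpos
      · have h2 : n ∣ 2 := by simpa using hdvd
        have := Nat.le_of_dvd (by norm_num) h2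
        omega
      · apply hno k hkpos
        have hcast : ((2 ^ k + 1 : ℕ) : ZMod n) = 0 :=
          (ZMod.natCast_eq_zero_iff _ _).mpr hdvd
        push_cast at hcast
        exact eq_neg_of_add_eq_zero_left hcast
    have hsq : ∀ h ∈ T, h * h ∈ T := by
      intro h hh
      rw [hmemT] at hh ⊢
      obtain ⟨k, rfl⟩ := hh
      exact ⟨k + 1, by rw [Nat.two_pow_succ, pow_add]⟩
    have hTimage : T.image (fun h => h * h) = T := by
      apply Finset.eq_of_subset_of_card_le
      · intro x hx
        simp only [Finset.mem_image] at hx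
        obtain ⟨h, hh, rfl⟩ := hx
        exact hsq h hh
      · rw [Finset.card_image_of_injective _ hinj]
    have he_idem : IsIdempotentElem e := by
      show e * e = e
      rw [mul_self_eq']
      calc MonoidAlgebra.mapDomain (fun h : G => h * h) e
          = ∑ h ∈ T, MonoidAlgebra.mapDomain (fun h : G => h * h) (MonoidAlgebra.single h (1 : ZMod 2)) := by
            rw [he_def]
            exact map_sum (AddMonoidHom.mk' (MonoidAlgebra.mapDomain (R := ZMod 2) (fun h : G => h * h))
              (MonoidAlgebra.mapDomain_add _)) _ _
        _ = ∑ h ∈ T, MonoidAlgebra.single (h * h) (1 : ZMod 2) := by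
            simp [MonoidAlgebra.mapDomain_single]
        _ = ∑ h' ∈ T.image (fun h => h * h), MonoidAlgebra.single h' (1 : ZMod 2) :=
            (Finset.sum_image (f := fun h' : G => (MonoidAlgebra.single h' (1 : ZMod 2) :
              MonoidAlgebra (ZMod 2) G)) (g := fun h : G => h * h)
              (fun x _ y _ hxy => hinj hxy)).symm
        _ = e := by rw [hTimage, he_def]
    obtain ⟨u, f, hu, hf, hfstar, hef⟩ := H e
    have h0 : (2 : MonoidAlgebra (ZMod 2) G) = 0 := two_eq_zero'
    have huu : u * u = u := by
      have hu_eq : u = e + f := by linear_combination -hef - f * h0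
      rw [hu_eq]
      linear_combination he_idem.eq + hf.eq + (e * f) * h0
    have hu1 : u = 1 := hu.mul_left_cancel (by rw [mul_one]; exact huu)
    have hfe : f = 1 + e := by
      rw [hu1] at hef
      linear_combination -hef - h0
    have hstar_e : MonoidAlgebra.mapDomain (fun x : G => x⁻¹) e = e := by
      have hone : MonoidAlgebra.mapDomain (fun x : G => x⁻¹) (1 : MonoidAlgebra (ZMod 2) G)
          = (1 : MonoidAlgebra (ZMod 2) G) := by
        have h := MonoidAlgebra.mapDomain_single (R := ZMod 2) (f := fun x : G => x⁻¹) (a := (1 : G))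
          (r := (1 : ZMod 2))
        rw [inv_one] at h
        calc MonoidAlgebra.mapDomain (fun x : G => x⁻¹) (1 : MonoidAlgebra (ZMod 2) G)
            = MonoidAlgebra.mapDomain (fun x : G => x⁻¹) (MonoidAlgebra.single 1 1) := by
              rw [MonoidAlgebra.one_def]
          _ = MonoidAlgebra.single 1 1 := h
          _ = 1 := (MonoidAlgebra.one_def).symm
      have hfstar' : MonoidAlgebra.mapDomain (fun x : G => x⁻¹) f = f :=
        MonoidAlgebra.coeff_injective hfstar
      have h2 := congrArg (MonoidAlgebra.mapDomain (fun x : G => x⁻¹)) hfe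
      rw [MonoidAlgebra.mapDomain_add, hone, hfstar', hfe] at h2
      exact (add_left_cancel h2).symm
    have hval : e.coeff g = (1 : ZMod 2) := by rw [hcoef]; simp [hgT]
    have hval2 : e.coeff g⁻¹ = 0 := by rw [hcoef]; simp [hginvT]
    have happ : Finsupp.mapDomain (fun x : G => x⁻¹) e.coeff g = e.coeff g⁻¹ := by
      have h2 := Finsupp.mapDomain_apply (f := fun x : G => x⁻¹)
        (fun x y hxy => inv_injective hxy) e.coeff g⁻¹
      simpa using h2
    rw [show Finsupp.mapDomain (fun x : G => x⁻¹) e.coeff = e.coeff from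
      congrArg MonoidAlgebra.coeff hstar_e, hval, hval2] at happ
    exact one_ne_zero happ
  · rintro ⟨t, ht, h2t⟩ a
    have hdvd : n ∣ 2 ^ t + 1 := by
      have hcast : ((2 ^ t + 1 : ℕ) : ZMod n) = 0 := by
        push_cast [h2t]
        ring
      exact (ZMod.natCast_eq_zero_iff _ _).mp hcast
    have hinv : ∀ h : G, h⁻¹ = h ^ (2 ^ t) := by
      intro h
      have hh : h ^ n = 1 := by rw [← hn]; exact Monoid.pow_exponent_eq_one h
      have h1 : h ^ (2 ^ t + 1) = 1 := by
        obtain ⟨c, hc⟩ := hdvd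
        rw [hc, pow_mul, hh, one_pow]
      exact inv_eq_of_mul_eq_one_right (by rw [← pow_succ']; exact h1)
    obtain ⟨u, f, hu, hf, hdecomp⟩ := clean' a
    exact ⟨u, f, hu, hf, star_of_idem t hinv hf, hdecomp⟩
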